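/- There exists a 3-coloring of the positive integers with no monochromatic positive-integer solution to x + y = 4z; i.e., R₃(x + y = 4z) = ∞ and the equation x + y = 4z is not 3-regular. -/

import Mathlib

/-- The equation `x + y = 4z` is not 3-regular. -/
theorem stmt_9 :
    ∃ χ : ℕ → Fin 3, ∀ x y z : ℕ, 0 < x → 0 < y → 0 < z →
      x + y = 4 * z → ¬ (χ x = χ y ∧ χ y = χ z) := by
  refine ⟨fun n => ⟨Nat.log 2 n % 3, by omega⟩, ?_⟩
  rintro x y z hx hy hz heq ⟨h1, h2⟩
  simp only [Fin.mk.injEq] at h1 h2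
  set k := Nat.log 2 z with hk
  have hzl : 2 ^ k ≤ z := Nat.pow_log_le_self 2 hz.ne'
  have hzu : z < 2 ^ (k + 1) := Nat.lt_pow_succ_log_self one_lt_two z
  set w := max x y with hw
  have hwge : 2 ^ (k + 1) ≤ w := by
    have : x + y ≤ 2 * w := by
      rcases max_cases x y with ⟨h, h'⟩ | ⟨h, h'⟩ <;> omega
    have : 2 ^ (k+1) ≤ 2 * z := by ring_nf; omega
    omega
  have hwlt : w < 2 ^ (k + 3) := by
    have : w ≤ x + y := by rcases max_cases x y with ⟨h, h'⟩ | ⟨h, h'⟩ <;> omega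
    have : 4 * z < 2 ^ (k + 3) := by
      have : 2 ^ (k + 3) = 4 * 2 ^ (k + 1) := by ring
      omega
    omega
  have hlow : k + 1 ≤ Nat.log 2 w := (Nat.le_log_iff_pow_le one_lt_two (by positivity)).2 hwge
  have hhigh : Nat.log 2 w < k + 3 := Nat.log_lt_of_lt_pow (by positivity) hwlt
  have hweq : Nat.log 2 w % 3 = k % 3 := by
    rcases max_cases x y with ⟨h, _⟩ | ⟨h, _⟩ <;> rw [hw, h] <;> omega
  omega
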